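/- Let v₀ ∈ ∂C be fixed by G = λ(Γ), with L = ℝv₀ and W = v₀^⊥, and suppose V/Γ is causal. If γ ∈ Γ satisfies L ⊆ V_γ = {λ(γ)v − v : v ∈ V}, then the translation part τ(γ) lies in W. -/

import Mathlib

open Set

/-- A symmetric bilinear form of Lorentzian signature `(+,−,…,−)`. -/
def IsLorentzian {V : Type*} [AddCommGroup V] [Module ℝ V]
    (ℓ : V →ₗ[ℝ] V →ₗ[ℝ] ℝ) : Prop :=
  (∀ u w : V, ℓ u w = ℓ w u) ∧
  ∃ (n : ℕ) (e : Module.Basis (Fin (n + 1)) ℝ V),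
    (∀ i j, i ≠ j → ℓ (e i) (e j) = 0) ∧ ℓ (e 0) (e 0) = 1 ∧
    ∀ i, i ≠ 0 → ℓ (e i) (e i) = -1

/-- Lemma 3.8 (paral): let `v₀ ∈ ∂C` (a nonzero lightlike vector in `C`) be fixed by all
linear parts of the causal group `Γ`, `L = ℝv₀`, `W = v₀^⊥`. If `γ ∈ Γ` satisfies
`L ⊆ V_γ = {λ(γ)v − v}`, then the translation part `τ(γ) = γ(0)` lies in `W`,
i.e. `ℓ(τ(γ), v₀) = 0`. -/
theorem translation_in_W_of_L_sub_Vgamma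
    {V : Type*} [AddCommGroup V] [Module ℝ V]
    (ℓ : V →ₗ[ℝ] V →ₗ[ℝ] ℝ) (hL : IsLorentzian ℓ)
    (C : Set V)
    (hCcone : ∀ (t : ℝ) (v : V), 0 ≤ t → v ∈ C → t • v ∈ C)
    (hCconv : Convex ℝ C)
    (hCunion : C ∪ (-C) = {v : V | 0 ≤ ℓ v v})
    (hCpointed : C ∩ (-C) = {(0 : V)})
    (Γ : Subgroup (V ≃ᵃ[ℝ] V))
    (hpres : ∀ γ ∈ Γ, ∀ u w : V, ℓ (γ.linear u) (γ.linear w) = ℓ u w)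
    (hCinv : ∀ γ ∈ Γ, γ.linear '' C = C)
    (hcausal : ∀ v : V, ∀ γ ∈ Γ, γ ≠ 1 → ℓ (γ v - v) (γ v - v) < 0)
    (v₀ : V) (hv₀C : v₀ ∈ C) (hv₀ne : v₀ ≠ 0) (hv₀light : ℓ v₀ v₀ = 0)
    (hfix : ∀ γ ∈ Γ, γ.linear v₀ = v₀)
    (γ : V ≃ᵃ[ℝ] V) (hγ : γ ∈ Γ)
    (hLsub : ∃ v : V, γ.linear v - v = v₀) :
    ℓ (γ (0 : V)) v₀ = 0 := by
  obtain ⟨v, hv⟩ := hLsub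
  set τ : V := γ 0 with hτ
  have hγne : γ ≠ 1 := by
    intro h
    apply hv₀ne
    rw [h] at hv
    have h1 : ((1 : V ≃ᵃ[ℝ] V)).linear v = v := rfl
    rw [h1, sub_self] at hv
    exact hv.symm
  -- γ x = γ.linear x + τ
  have hdecomp : ∀ x : V, γ x = γ.linear x + τ := by
    intro x
    have := γ.toAffineMap.linearMap_vsub x 0
    simp only [vsub_eq_sub, sub_zero] at this
    have h2 : γ.linear x = γ x - γ 0 := this
    rw [h2]; simp [hτ]
  -- γ (t•v) - t•v = t•v₀ + τ
  have key : ∀ t : ℝ, γ (t • v) - t • v = t • v₀ + τ := by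
    intro t
    rw [hdecomp]
    have : γ.linear (t • v) = t • γ.linear v := by simp
    rw [this, ← hv]
    module
  have hquad : ∀ t : ℝ, ℓ (t • v₀ + τ) (t • v₀ + τ) < 0 := by
    intro t
    have := hcausal (t • v) γ hγ hγne
    rwa [key t] at this
  by_contra hne
  have hsym := hL.1
  set c : ℝ := ℓ τ v₀ with hc
  have hcne : c ≠ 0 := hne
  set q : ℝ := ℓ τ τ with hq
  have hexp : ∀ t : ℝ, ℓ (t • v₀ + τ) (t • v₀ + τ) = 2 * t * c + q := by
    intro t
    have h1 : ℓ v₀ τ = c := by rw [hc, hsym]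
    simp only [map_add, map_smul, LinearMap.add_apply, LinearMap.smul_apply,
      smul_eq_mul, hv₀light, h1, ← hc, ← hq]
    ring
  have h2c : (2 : ℝ) * c ≠ 0 := by positivity
  have hval : 2 * ((1 - q) / (2 * c)) * c + q = 1 := by
    field_simp
    ring
  have := hquad ((1 - q) / (2 * c))
  rw [hexp, hval] at this
  linarith
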